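/- Let O be an integral domain with fraction field E, and let 𝒯 be a commutative local O-algebra with maximal ideal 𝔪 and residue field κ = 𝒯/𝔪, which is torsion-free as an O-module. Let M be a finitely generated 𝒯-module such that M ⊗_O E is a free module of rank r over 𝒯 ⊗_O E. If M ⊗_𝒯 κ is a κ-vector space of dimension at most r, then M is a free 𝒯-module of rank r. -/

import Mathlib

/-- Let `O` be an integral domain with fraction field `E` and `𝒯` a
commutative local `O`-algebra, torsion-free as an `O`-module, with maximal ideal `𝔪` and
residue field `κ = 𝒯/𝔪`.  Let `M` be a finitely generated `𝒯`-module such that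
`M ⊗_O E` is free of rank `r` over `𝒯 ⊗_O E`.  If `dim_κ (M ⊗_𝒯 κ) ≤ r` then `M` is a
free `𝒯`-module of rank `r`.

Here `𝒯 ⊗_O E` and `M ⊗_O E` are realized as the localizations of `𝒯` and `M` at the
multiplicative set `S`, the image in `𝒯` of the nonzero elements of `O`, and
`M ⊗_𝒯 κ` is realized as `M/𝔪M`. -/
theorem free_of_fiber_dim_le
    (O : Type*) [CommRing O] [IsDomain O]
    (𝒯 : Type*) [CommRing 𝒯] [Algebra O 𝒯] [IsLocalRing 𝒯]
    (htf : ∀ (a : O) (t : 𝒯), a • t = 0 → a = 0 ∨ t = 0)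
    (M : Type*) [AddCommGroup M] [Module 𝒯 M] [Module.Finite 𝒯 M]
    (r : ℕ)
    (hfree : Nonempty (Module.Basis (Fin r)
      (Localization (Submonoid.map (algebraMap O 𝒯) (nonZeroDivisors O)))
      (LocalizedModule (Submonoid.map (algebraMap O 𝒯) (nonZeroDivisors O)) M)))
    (hdim : Module.rank (𝒯 ⧸ IsLocalRing.maximalIdeal 𝒯)
      (M ⧸ ((IsLocalRing.maximalIdeal 𝒯) • ⊤ : Submodule 𝒯 M)) ≤ r) :
    Nonempty (Module.Basis (Fin r) 𝒯 M) := by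
  classical
  obtain ⟨b⟩ := hfree
  set S : Submonoid 𝒯 := Submonoid.map (algebraMap O 𝒯) (nonZeroDivisors O) with hSdef
  set 𝔪 := IsLocalRing.maximalIdeal 𝒯 with h𝔪
  set p : Submodule 𝒯 M := (𝔪 • ⊤ : Submodule 𝒯 M) with hp
  -- S consists of nonzerodivisors
  have hS : S ≤ nonZeroDivisors 𝒯 := by
    rintro s ⟨a, ha, rfl⟩
    rw [mem_nonZeroDivisors_iff_right]
    intro x hx
    rw [mul_comm, ← Algebra.smul_def] at hx
    rcases htf a x hx with h | h
    · exact absurd h (nonZeroDivisors.ne_zero ha)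
    · exact h
  -- residue field
  letI : Field (𝒯 ⧸ 𝔪) := Ideal.Quotient.field 𝔪
  haveI : Module.Finite (𝒯 ⧸ 𝔪) (M ⧸ p) :=
    Module.Finite.of_restrictScalars_finite 𝒯 _ _
  set n := Module.finrank (𝒯 ⧸ 𝔪) (M ⧸ p) with hn
  have hnr : n ≤ r := Module.finrank_le_of_rank_le hdim
  let bb : Module.Basis (Fin n) (𝒯 ⧸ 𝔪) (M ⧸ p) := Module.finBasis _ _
  -- a spanning family of size r in the fiber
  let v : Fin r → M ⧸ p := fun i => if h : (i : ℕ) < n then bb ⟨i, h⟩ else 0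
  have hv : Submodule.span (𝒯 ⧸ 𝔪) (Set.range v) = ⊤ := by
    rw [eq_top_iff, ← bb.span_eq]
    apply Submodule.span_mono
    rintro _ ⟨j, rfl⟩
    exact ⟨⟨(j : ℕ), lt_of_lt_of_le j.2 hnr⟩, by simp [v, j.2]⟩
  -- lift to M
  have hxex : ∀ i, ∃ m : M, Submodule.Quotient.mk m = v i := fun i =>
    Submodule.Quotient.mk_surjective p (v i)
  choose x hx using hxex
  -- Nakayama: x spans M
  have hspan : Submodule.span 𝒯 (Set.range x) = ⊤ := by
    have hmap : Submodule.map p.mkQ (Submodule.span 𝒯 (Set.range x)) = ⊤ := by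
      rw [Submodule.map_span]
      have hcomp : ⇑p.mkQ ∘ x = v := funext fun i => by
        simpa [Submodule.mkQ_apply] using hx i
      rw [← Set.range_comp, hcomp, ← Submodule.restrictScalars_span 𝒯 (𝒯 ⧸ 𝔪) Ideal.Quotient.mk_surjective,
        hv, Submodule.restrictScalars_top]
    rw [Submodule.map_mkQ_eq_top] at hmap
    rw [eq_top_iff]
    refine Submodule.le_of_le_smul_of_le_jacobson_bot (I := 𝔪) (N := Submodule.span 𝒯 (Set.range x)) (Module.finite_def.mp ‹_›) ?_ ?_
    · rw [IsLocalRing.jacobson_eq_maximalIdeal (⊥ : Ideal 𝒯) bot_ne_top]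
    · have h2 : Submodule.span 𝒯 (Set.range x) ⊔ (𝔪 • ⊤ : Submodule 𝒯 M) = ⊤ := by
        rw [sup_comm]; exact hmap
      exact h2.ge
  -- the surjection φ : 𝒯^r → M
  set φ : (Fin r →₀ 𝒯) →ₗ[𝒯] M := Finsupp.linearCombination 𝒯 x with hφdef
  have hφsurj : Function.Surjective φ := by
    rw [← LinearMap.range_eq_top, Finsupp.range_linearCombination, hspan]
  -- localize
  set R' := Localization S
  set fFin : (Fin r →₀ 𝒯) →ₗ[𝒯] (Fin r →₀ R') :=
    Finsupp.mapRange.linearMap (Algebra.linearMap 𝒯 R') with hfFin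
  set g := LocalizedModule.mkLinearMap S M with hg
  set ψ : (Fin r →₀ R') →ₗ[R'] LocalizedModule S M :=
    IsLocalizedModule.mapExtendScalars S fFin g R' φ with hψdef
  have hψcoe : ∀ y, ψ y = IsLocalizedModule.map S fFin g φ y := fun _ => rfl
  have hψsurj : Function.Surjective ψ := by
    have := IsLocalizedModule.map_surjective S fFin g φ hφsurj
    intro y
    obtain ⟨z, hz⟩ := this y
    exact ⟨z, by rw [hψcoe]; exact hz⟩
  haveI : Module.Finite R' (LocalizedModule S M) := Module.Finite.of_basis b
  have hψinj : Function.Injective ψ :=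
    OrzechProperty.injective_of_surjective_of_injective
      (b.repr.symm.toLinearMap) ψ b.repr.symm.injective hψsurj
  -- kernel of φ is trivial
  have hφinj : Function.Injective φ := by
    rw [← LinearMap.ker_eq_bot, eq_bot_iff]
    intro z hz
    simp only [LinearMap.mem_ker] at hz
    have h1 : ψ (fFin z) = 0 := by
      rw [hψcoe, IsLocalizedModule.map_apply, hz, map_zero]
    have h2 : fFin z = 0 := by
      apply hψinj
      rw [h1, map_zero]
    have halg : Function.Injective (algebraMap 𝒯 R') := IsLocalization.injective R' hS
    have : ∀ i, z i = 0 := by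
      intro i
      apply halg
      have := DFunLike.congr_fun h2 i
      simpa [fFin] using this
    simp only [Submodule.mem_bot]
    ext i
    exact this i
  exact ⟨Module.Basis.ofRepr (LinearEquiv.ofBijective φ ⟨hφinj, hφsurj⟩).symm⟩
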